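/- Let σ_1, σ_2, ... be independent exponential random variables where σ_i has rate λ̃_i = 17·i·√(log n). Then for all 0 < β < α < 1 and any c_3 > 0, for all sufficiently large n, P(Σ_{i=1}^{⌊n^α⌋} σ_i < 1) ≤ exp(-c_3·n^β). -/

import Mathlib

set_option maxHeartbeats 1000000

open MeasureTheory ProbabilityTheory
open scoped ENNReal

open Filter

lemma my_fact_aux (m k : ℕ) : (m + 1) ^ k * m.factorial ≤ (m + k).factorial := by
  induction k with
  | zero => simp
  | succ k ih =>
      calc (m + 1) ^ (k + 1) * m.factorial = (m + 1) ^ k * m.factorial * (m + 1) := by ring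
      _ ≤ (m + k).factorial * (m + 1) := Nat.mul_le_mul_right _ ih
      _ ≤ (m + k).factorial * (m + k + 1) := Nat.mul_le_mul_left _ (by omega)
      _ = (m + (k + 1)).factorial := by rw [show m + (k+1) = (m+k)+1 from rfl, Nat.factorial_succ]; ring

lemma my_nat_ineq (m k : ℕ) : m.factorial * m ^ k * k.factorial ≤ k ^ k * (m + k).factorial := by
  calc m.factorial * m ^ k * k.factorial ≤ m.factorial * (m + 1) ^ k * k ^ k := by
        gcongr
        · omega
        · exact Nat.factorial_le_pow k
  _ = (m + 1) ^ k * m.factorial * k ^ k := by ring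
  _ ≤ (m + k).factorial * k ^ k := Nat.mul_le_mul_right _ (my_fact_aux m k)
  _ = k ^ k * (m + k).factorial := by ring

lemma my_prod_Ioc (n : ℕ) : (∏ x ∈ Finset.Ioc 0 n, x) = n.factorial := by
  rw [← Finset.Icc_add_one_left_eq_Ioc, ← Finset.Ico_add_one_right_eq_Icc]
  exact Finset.prod_Ico_id_eq_factorial n

lemma my_prod_shift (m k : ℕ) :
    k.factorial * (∏ i ∈ Finset.Icc 1 m, (i + k)) = (m + k).factorial := by
  have h1 : (∏ i ∈ Finset.Icc 1 m, (i + k)) = ∏ j ∈ Finset.Ioc k (m + k), j := by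
    rw [show Finset.Icc 1 m = Finset.Ioc 0 m from Finset.Icc_add_one_left_eq_Ioc 0 m]
    rw [show Finset.Ioc k (m+k) = Finset.Ioc (0+k) (m+k) by norm_num]
    rw [← Finset.map_add_right_Ioc 0 m k]
    rw [Finset.prod_map]
    simp [addRightEmbedding]
  rw [h1, ← my_prod_Ioc k, ← my_prod_Ioc (m + k)]
  exact Finset.prod_Ioc_consecutive _ (Nat.zero_le k) (by omega)

lemma my_prod_bound (m k : ℕ) (hm : 1 ≤ m) (hk : 1 ≤ k) :
    ∏ i ∈ Finset.Icc 1 m, ((i : ℝ) / ((i : ℝ) + (k : ℝ))) ≤ ((k : ℝ) / (m : ℝ)) ^ k := by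
  have hm0 : (0:ℝ) < m := by exact_mod_cast hm
  have hk0 : (0:ℝ) < k := by exact_mod_cast hk
  have hA : ∏ i ∈ Finset.Icc 1 m, (i : ℝ) = (m.factorial : ℝ) := by
    rw [← Nat.cast_prod, ← my_prod_Ioc m, show Finset.Icc 1 m = Finset.Ioc 0 m from Finset.Icc_add_one_left_eq_Ioc 0 m]
  have hB : ∏ i ∈ Finset.Icc 1 m, ((i : ℝ) + (k : ℝ)) = ((∏ i ∈ Finset.Icc 1 m, (i + k) : ℕ) : ℝ) := by
    push_cast; rfl
  have hBpos : (0:ℝ) < ∏ i ∈ Finset.Icc 1 m, ((i : ℝ) + (k : ℝ)) := by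
    apply Finset.prod_pos
    intro i hi
    have : (1:ℕ) ≤ i := (Finset.mem_Icc.mp hi).1
    have : (0:ℝ) < i := by exact_mod_cast this
    linarith
  rw [Finset.prod_div_distrib, hA, div_pow, div_le_div_iff₀ hBpos (by positivity)]
  -- goal : m! * m^k ≤ k^k * ∏ (i+k)
  have hkf : (0:ℝ) < (k.factorial : ℝ) := by exact_mod_cast k.factorial_pos
  rw [← mul_le_mul_iff_right₀ hkf]
  calc (k.factorial : ℝ) * ((m.factorial : ℝ) * (m:ℝ) ^ k)
      = ((m.factorial * m ^ k * k.factorial : ℕ) : ℝ) := by push_cast; ring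
    _ ≤ ((k ^ k * (m + k).factorial : ℕ) : ℝ) := by exact_mod_cast my_nat_ineq m k
    _ = (k:ℝ) ^ k * ((k.factorial : ℝ) * (∏ i ∈ Finset.Icc 1 m, (i + k) : ℕ)) := by
        rw [← my_prod_shift m k]; push_cast; ring
    _ = (k.factorial : ℝ) * ((k:ℝ) ^ k * ∏ i ∈ Finset.Icc 1 m, ((i : ℝ) + (k : ℝ))) := by
        rw [hB]; ring


lemma my_mgf_le {Ω : Type} [MeasurableSpace Ω] (μ : Measure Ω) [IsProbabilityMeasure μ]
    (X : Ω → ℝ) (hX : Measurable X) (lam θ : ℝ) (hlam : 0 < lam) (hθ : 0 < θ)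
    (htail : ∀ t : ℝ, 0 ≤ t → μ {ω | t ≤ X ω} = ENNReal.ofReal (Real.exp (-lam * t))) :
    mgf X μ (-θ) ≤ (2 * lam / θ) / (2 * lam / θ + 1) := by
  set r : ℝ := 2 * lam / θ with hr_def
  have hr : 0 < r := by positivity
  -- X ≥ 0 a.e.
  have h0 : μ {ω | 0 ≤ X ω} = 1 := by simpa using htail 0 le_rfl
  have hae : ∀ᵐ ω ∂μ, 0 ≤ X ω := by
    rw [ae_iff]
    have hms : MeasurableSet {ω | 0 ≤ X ω} := measurableSet_le measurable_const hX
    have := prob_compl_eq_zero_iff hms |>.mpr h0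
    simpa [Set.compl_setOf] using this
  set f : Ω → ℝ := fun ω => Real.exp (-θ * X ω) with hf_def
  have hf_meas : Measurable f := (hX.const_mul (-θ)).exp
  have hf_nn : ∀ᵐ ω ∂μ, 0 ≤ f ω := Eventually.of_forall fun ω => (Real.exp_pos _).le
  have hf_le1 : ∀ᵐ ω ∂μ, f ω ≤ 1 := by
    filter_upwards [hae] with ω h
    have : -θ * X ω ≤ 0 := by nlinarith
    simp only [hf_def]
    exact Real.exp_le_one_iff.mpr this
  have h_int : Integrable f μ := by
    refine Integrable.mono' (integrable_const (1:ℝ)) hf_meas.aestronglyMeasurable ?_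
    filter_upwards [hf_le1] with ω h
    rwa [Real.norm_eq_abs, abs_of_nonneg (Real.exp_pos _).le]
  have hrepr : mgf X μ (-θ) = ∫ t in Set.Ioc (0:ℝ) 1, (μ {a | t ≤ f a}).toReal := by
    rw [mgf]
    exact h_int.integral_eq_integral_Ioc_meas_le hf_nn hf_le1
  -- integrand bound
  have hanti : Antitone (fun t : ℝ => (μ {a | t ≤ f a}).toReal) := by
    intro s t hst
    exact ENNReal.toReal_mono (measure_ne_top μ _)
      (measure_mono fun a ha => le_trans hst ha)
  have hint1 : IntegrableOn (fun t : ℝ => (μ {a | t ≤ f a}).toReal) (Set.Ioc 0 1) := by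
    refine Integrable.mono' (g := fun _ => (1:ℝ))
      (integrableOn_const (by simp [Real.volume_Ioc]))
      hanti.measurable.aestronglyMeasurable ?_
    refine Eventually.of_forall fun t => ?_
    rw [Real.norm_eq_abs, abs_of_nonneg ENNReal.toReal_nonneg]
    exact ENNReal.toReal_le_of_le_ofReal zero_le_one (by simpa using prob_le_one)
  have hrint : IntervalIntegrable (fun x : ℝ => x ^ r) volume 0 1 :=
    intervalIntegral.intervalIntegrable_rpow (Or.inl hr.le)
  have hint2 : IntegrableOn (fun t : ℝ => 1 - t ^ r) (Set.Ioc 0 1) := by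
    refine Integrable.sub ?_ hrint.1
    exact integrableOn_const (by simp [Real.volume_Ioc])
  have hone : ∀ᵐ t : ℝ ∂volume, t ≠ 1 := by
    refine ae_iff.mpr ?_
    simpa only [ne_eq, not_not, Set.setOf_eq_eq_singleton] using Real.volume_singleton
  have hle : ∀ᵐ t ∂(volume.restrict (Set.Ioc (0:ℝ) 1)),
      (μ {a | t ≤ f a}).toReal ≤ 1 - t ^ r := by
    filter_upwards [ae_restrict_mem measurableSet_Ioc, ae_restrict_of_ae hone] with t ht htne
    have ht0 : 0 < t := ht.1
    have ht1 : t < 1 := lt_of_le_of_ne ht.2 htne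
    set g : ℝ := -Real.log t / θ with hg_def
    have hlogt : Real.log t < 0 := Real.log_neg ht0 ht1
    have hg : 0 < g := div_pos (by linarith) hθ
    have hset : {a | t ≤ f a} = {a | X a ≤ g} := by
      ext a
      simp only [Set.mem_setOf_eq, hf_def]
      rw [← Real.log_le_iff_le_exp ht0]
      rw [hg_def, le_div_iff₀ hθ]
      constructor <;> intro h <;> nlinarith
    have hdisj : Disjoint {a | X a ≤ g} {a | 2 * g ≤ X a} := by
      rw [Set.disjoint_left]
      intro a ha ha'
      simp only [Set.mem_setOf_eq] at ha ha'
      linarith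
    have hmeas2 : MeasurableSet {a | 2 * g ≤ X a} := measurableSet_le measurable_const hX
    have hsum : μ {a | X a ≤ g} + μ {a | 2 * g ≤ X a} ≤ 1 := by
      rw [← measure_union hdisj hmeas2]
      exact prob_le_one
    have htail2 : μ {a | 2 * g ≤ X a} = ENNReal.ofReal (t ^ r) := by
      rw [htail (2 * g) (by positivity)]
      congr 1
      rw [Real.rpow_def_of_pos ht0]
      congr 1
      rw [hg_def, hr_def]
      field_simp
    rw [hset]
    rw [htail2] at hsum
    have := ENNReal.toReal_mono (by simp) hsum
    rw [ENNReal.toReal_add (measure_ne_top μ _) ENNReal.ofReal_ne_top,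
      ENNReal.toReal_ofReal (Real.rpow_nonneg ht0.le r), ENNReal.toReal_one] at this
    linarith
  have hcalc : ∫ t in Set.Ioc (0:ℝ) 1, (1 - t ^ r) = r / (r + 1) := by
    rw [← intervalIntegral.integral_of_le zero_le_one]
    rw [intervalIntegral.integral_sub intervalIntegrable_const hrint]
    rw [integral_rpow (Or.inl (by linarith : (-1:ℝ) < r))]
    rw [Real.one_rpow, Real.zero_rpow (by positivity : r + 1 ≠ 0)]
    simp only [intervalIntegral.integral_const, smul_eq_mul, sub_zero, mul_one]
    field_simp
    ring
  calc mgf X μ (-θ) = ∫ t in Set.Ioc (0:ℝ) 1, (μ {a | t ≤ f a}).toReal := hrepr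
    _ ≤ ∫ t in Set.Ioc (0:ℝ) 1, (1 - t ^ r) := integral_mono_ae hint1 hint2 hle
    _ = r / (r + 1) := hcalc

/-- Let `σ₁, σ₂, …` be independent exponential random variables where
`σ_i` has rate `17·i·√(log n)`. Then for all `0 < β < α < 1` and any `c₃ > 0`, for
all sufficiently large `n`, `P(∑_{i=1}^{⌊n^α⌋} σ_i < 1) ≤ exp(-c₃ n^β)`. -/
theorem stmt4 (α β c₃ : ℝ) (hβ : 0 < β) (hβα : β < α) (hα : α < 1) (hc₃ : 0 < c₃) :
    ∃ N : ℕ, ∀ n : ℕ, N ≤ n →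
      ∀ (Ω : Type) [MeasurableSpace Ω] (μ : Measure Ω), IsProbabilityMeasure μ →
        ∀ σ : ℕ → Ω → ℝ, (∀ i, Measurable (σ i)) →
          iIndepFun σ μ →
          (∀ i : ℕ, 1 ≤ i → ∀ t : ℝ, 0 ≤ t →
            μ {ω | t ≤ σ i ω}
              = ENNReal.ofReal (Real.exp (-(17 * (i : ℝ) * Real.sqrt (Real.log n)) * t))) →
          μ {ω | ∑ i ∈ Finset.Icc 1 ⌊(n : ℝ) ^ α⌋₊, σ i ω < 1}
            ≤ ENNReal.ofReal (Real.exp (-c₃ * (n : ℝ) ^ β)) := by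
  have hα0 : 0 < α := hβ.trans hβα
  set γ : ℝ := (α + β) / 2 with hγ_def
  set δ : ℝ := (α - β) / 2 with hδ_def
  have hδ : 0 < δ := by rw [hδ_def]; linarith
  have hlog2 : 0 < Real.log 2 := Real.log_pos (by norm_num)
  set T₀ : ℝ := (68 / δ) ^ 2 + 2 * (2 * Real.log 2 + c₃) / δ + Real.log 2 / α + 1 with hT_def
  obtain ⟨N, hN⟩ := eventually_atTop.mp
    ((Real.tendsto_log_atTop.comp tendsto_natCast_atTop_atTop).eventually_ge_atTop T₀)
  refine ⟨N, fun n hn Ω _ μ hμ σ hσmeas hindep htail => ?_⟩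
  have hL : T₀ ≤ Real.log n := hN n hn
  set L : ℝ := Real.log n with hL_def
  have ht1 : (0:ℝ) ≤ (68 / δ) ^ 2 := sq_nonneg _
  have ht2 : (0:ℝ) ≤ 2 * (2 * Real.log 2 + c₃) / δ := by positivity
  have ht3 : (0:ℝ) ≤ Real.log 2 / α := by positivity
  rw [hT_def] at hL
  have hL1 : 1 ≤ L := by linarith
  have hn1 : (1:ℝ) < (n:ℝ) := by
    by_contra h
    push_neg at h
    have := Real.log_nonpos (by positivity) h
    rw [← hL_def] at this; linarith
  have hn0 : (0:ℝ) < (n:ℝ) := by linarith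
  have hsqrt1 : 1 ≤ Real.sqrt L := by
    have := Real.sqrt_le_sqrt hL1
    rwa [Real.sqrt_one] at this
  set c : ℝ := 17 * Real.sqrt L with hc_def
  have hc : 0 < c := by rw [hc_def]; linarith
  set k : ℕ := ⌈(n:ℝ) ^ γ⌉₊ with hk_def
  set m : ℕ := ⌊(n:ℝ) ^ α⌋₊ with hm_def
  set θ : ℝ := 2 * c * (k:ℕ) with hθ_def
  -- basic rpow facts
  have hrpow_mono : ∀ {y z : ℝ}, y ≤ z → (n:ℝ) ^ y ≤ (n:ℝ) ^ z := fun hyz =>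
    Real.rpow_le_rpow_of_exponent_le hn1.le hyz
  have hnγ1 : (1:ℝ) ≤ (n:ℝ) ^ γ := by
    have := hrpow_mono (le_of_lt (by rw [hγ_def]; linarith : (0:ℝ) < γ))
    rwa [Real.rpow_zero] at this
  have hnβ1 : (1:ℝ) ≤ (n:ℝ) ^ β := by
    have := hrpow_mono hβ.le
    rwa [Real.rpow_zero] at this
  have hk1 : 1 ≤ k := Nat.one_le_ceil_iff.mpr (by linarith)
  have hkR : (1:ℝ) ≤ (k:ℝ) := by exact_mod_cast hk1
  have hkpos : (0:ℝ) < (k:ℝ) := by linarith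
  have hklow : (n:ℝ) ^ β ≤ (k:ℝ) :=
    le_trans (hrpow_mono (by rw [hγ_def]; linarith)) (Nat.le_ceil _)
  have hkup : (k:ℝ) ≤ 2 * (n:ℝ) ^ γ := by
    have h1 : (k:ℝ) < (n:ℝ) ^ γ + 1 := Nat.ceil_lt_add_one (by positivity)
    linarith
  -- n^α ≥ 2
  have hαL : Real.log 2 ≤ α * L := by
    have hL2 : Real.log 2 / α ≤ L := by linarith
    calc Real.log 2 = α * (Real.log 2 / α) := by field_simp
    _ ≤ α * L := mul_le_mul_of_nonneg_left hL2 hα0.le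
  have hnα2 : (2:ℝ) ≤ (n:ℝ) ^ α := by
    rw [Real.rpow_def_of_pos hn0]
    calc (2:ℝ) = Real.exp (Real.log 2) := (Real.exp_log two_pos).symm
    _ ≤ Real.exp (Real.log n * α) := Real.exp_le_exp.mpr (by rw [← hL_def]; linarith [hαL])
  have hm1 : 1 ≤ m := Nat.le_floor (by push_cast; linarith)
  have hmR : (1:ℝ) ≤ (m:ℝ) := by exact_mod_cast hm1
  have hmpos : (0:ℝ) < (m:ℝ) := by linarith
  have hmlow : (n:ℝ) ^ α / 2 ≤ (m:ℝ) := by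
    have h1 : (n:ℝ) ^ α - 1 < (m:ℝ) := Nat.sub_one_lt_floor _
    linarith
  -- nonnegativity a.e. of the σ i, i ≥ 1
  have hae : ∀ i : ℕ, 1 ≤ i → ∀ᵐ ω ∂μ, 0 ≤ σ i ω := by
    intro i hi
    have h0 : μ {ω | 0 ≤ σ i ω} = 1 := by simpa using htail i hi 0 le_rfl
    rw [ae_iff]
    have hms : MeasurableSet {ω | 0 ≤ σ i ω} := measurableSet_le measurable_const (hσmeas i)
    have := (prob_compl_eq_zero_iff hms).mpr h0
    simpa [Set.compl_setOf] using this
  set S : Ω → ℝ := ∑ i ∈ Finset.Icc 1 m, σ i with hS_def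
  have hSae : ∀ᵐ ω ∂μ, 0 ≤ S ω := by
    have hall : ∀ᵐ ω ∂μ, ∀ i ∈ Finset.Icc 1 m, 0 ≤ σ i ω := by
      rw [Filter.eventually_all_finset]
      intro i hi
      exact hae i (Finset.mem_Icc.mp hi).1
    filter_upwards [hall] with ω h
    rw [hS_def, Finset.sum_apply]
    exact Finset.sum_nonneg h
  have hSfun : S = fun a => ∑ i ∈ Finset.Icc 1 m, σ i a := by
    ext a; rw [hS_def]; exact Finset.sum_apply a _ _
  have hSmeas : Measurable S := by
    rw [hSfun]; exact Finset.measurable_sum _ fun i _ => hσmeas i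
  have hθpos : 0 < θ := by rw [hθ_def]; positivity
  have h_int : Integrable (fun ω => Real.exp (-θ * S ω)) μ := by
    refine Integrable.mono' (g := fun _ => (1:ℝ)) (integrable_const 1)
      ((hSmeas.const_mul (-θ)).exp.aestronglyMeasurable) ?_
    filter_upwards [hSae] with ω h
    rw [Real.norm_eq_abs, abs_of_nonneg (Real.exp_pos _).le]
    refine Real.exp_le_one_iff.mpr ?_
    rw [neg_mul]
    exact neg_nonpos.mpr (mul_nonneg hθpos.le h)
  have hcher := measure_le_le_exp_mul_mgf (μ := μ) (X := S) (t := -θ) 1 (by linarith) h_int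
  rw [neg_neg, mul_one] at hcher
  -- mgf factorization and bound
  have hmgf_sum : mgf S μ (-θ) = ∏ i ∈ Finset.Icc 1 m, mgf (σ i) μ (-θ) :=
    hindep.mgf_sum hσmeas _
  have hfac : ∀ i ∈ Finset.Icc 1 m, mgf (σ i) μ (-θ) ≤ (i:ℝ) / ((i:ℝ) + (k:ℝ)) := by
    intro i hi
    have hi1 : 1 ≤ i := (Finset.mem_Icc.mp hi).1
    have hiR : (1:ℝ) ≤ (i:ℝ) := by exact_mod_cast hi1
    have hlam : (0:ℝ) < 17 * (i:ℝ) * Real.sqrt L := by nlinarith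
    have hb := my_mgf_le μ (σ i) (hσmeas i) (17 * (i:ℝ) * Real.sqrt L) θ hlam hθpos
      (htail i hi1)
    have heq : (2 * (17 * (i:ℝ) * Real.sqrt L) / θ) = (i:ℝ) / (k:ℝ) := by
      rw [hθ_def, hc_def]
      have hs0 : Real.sqrt L ≠ 0 := by linarith
      field_simp
    rw [heq] at hb
    have heq2 : ((i:ℝ) / (k:ℝ)) / ((i:ℝ) / (k:ℝ) + 1) = (i:ℝ) / ((i:ℝ) + (k:ℝ)) := by
      have hik : (0:ℝ) < (i:ℝ) + (k:ℝ) := by linarith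
      have h1 : (0:ℝ) < (i:ℝ) / (k:ℝ) + 1 := by positivity
      field_simp
    rwa [heq2] at hb
  have hprod : ∏ i ∈ Finset.Icc 1 m, mgf (σ i) μ (-θ) ≤ ((k:ℝ) / (m:ℝ)) ^ k := by
    refine le_trans (Finset.prod_le_prod (fun i _ => mgf_nonneg) hfac) ?_
    exact my_prod_bound m k hm1 hk1
  -- final arithmetic
  have hsqrtbd : 68 * Real.sqrt L ≤ δ * L := by
    have h1 : (68 / δ) ^ 2 ≤ L := by linarith
    have h2 : 68 / δ ≤ Real.sqrt L := by
      have := Real.sqrt_le_sqrt h1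
      rwa [Real.sqrt_sq (by positivity)] at this
    have h3 : 68 ≤ δ * Real.sqrt L := by
      have := mul_le_mul_of_nonneg_left h2 hδ.le
      rwa [mul_div_cancel₀ _ hδ.ne'] at this
    have h4 := mul_le_mul_of_nonneg_right h3 (Real.sqrt_nonneg L)
    have h5 : Real.sqrt L * Real.sqrt L = L := Real.mul_self_sqrt (by linarith)
    calc 68 * Real.sqrt L ≤ δ * Real.sqrt L * Real.sqrt L := h4
    _ = δ * L := by rw [mul_assoc, h5]
  have hLc : 2 * (2 * Real.log 2 + c₃) ≤ δ * L := by
    have h1 : 2 * (2 * Real.log 2 + c₃) / δ ≤ L := by linarith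
    calc 2 * (2 * Real.log 2 + c₃) = δ * (2 * (2 * Real.log 2 + c₃) / δ) := by field_simp
    _ ≤ δ * L := mul_le_mul_of_nonneg_left h1 hδ.le
  have hlogk : Real.log (k:ℝ) ≤ Real.log 2 + γ * L := by
    calc Real.log (k:ℝ) ≤ Real.log (2 * (n:ℝ) ^ γ) := Real.log_le_log hkpos hkup
    _ = Real.log 2 + γ * L := by
        rw [Real.log_mul two_ne_zero (by positivity), Real.log_rpow hn0, hL_def]
  have hlogm : α * L - Real.log 2 ≤ Real.log (m:ℝ) := by
    calc α * L - Real.log 2 = Real.log ((n:ℝ) ^ α / 2) := by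
          rw [Real.log_div (by positivity) two_ne_zero, Real.log_rpow hn0, hL_def]
    _ ≤ Real.log (m:ℝ) := Real.log_le_log (by positivity) hmlow
  have hstep : c * 2 + (Real.log (k:ℝ) - Real.log (m:ℝ)) ≤ -c₃ := by
    have hγα : γ - α = -δ := by rw [hγ_def, hδ_def]; ring
    have h5 : γ * L - α * L = -(δ * L) := by rw [hγ_def, hδ_def]; ring
    have : Real.log (k:ℝ) - Real.log (m:ℝ) ≤ 2 * Real.log 2 - δ * L := by
      linarith [hlogk, hlogm]
    rw [hc_def]
    linarith
  have hexp : θ + (k:ℝ) * (Real.log (k:ℝ) - Real.log (m:ℝ)) ≤ -c₃ * (n:ℝ) ^ β := by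
    have h1 : θ + (k:ℝ) * (Real.log (k:ℝ) - Real.log (m:ℝ))
        = (k:ℝ) * (c * 2 + (Real.log (k:ℝ) - Real.log (m:ℝ))) := by
      rw [hθ_def]; ring
    rw [h1]
    calc (k:ℝ) * (c * 2 + (Real.log (k:ℝ) - Real.log (m:ℝ)))
        ≤ (k:ℝ) * (-c₃) := mul_le_mul_of_nonneg_left hstep (by linarith)
    _ ≤ -c₃ * (n:ℝ) ^ β := by
      have h2 : c₃ * (n:ℝ) ^ β ≤ c₃ * (k:ℝ) := mul_le_mul_of_nonneg_left hklow hc₃.le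
      linarith
  have hfinal : Real.exp θ * ((k:ℝ) / (m:ℝ)) ^ k ≤ Real.exp (-c₃ * (n:ℝ) ^ β) := by
    have hpow : ((k:ℝ) / (m:ℝ)) ^ k = Real.exp ((k:ℝ) * Real.log ((k:ℝ) / (m:ℝ))) := by
      rw [← Real.log_pow, Real.exp_log (pow_pos (by positivity) _)]
    rw [hpow, ← Real.exp_add]
    apply Real.exp_le_exp.mpr
    rw [Real.log_div hkpos.ne' hmpos.ne']
    exact hexp
  -- assemble
  have hchain : (μ {ω | S ω ≤ 1}).toReal ≤ Real.exp (-c₃ * (n:ℝ) ^ β) := by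
    refine le_trans hcher (le_trans ?_ hfinal)
    rw [hmgf_sum]
    exact mul_le_mul_of_nonneg_left hprod (Real.exp_pos _).le
  have hsub : {ω | ∑ i ∈ Finset.Icc 1 m, σ i ω < 1} ⊆ {ω | S ω ≤ 1} := by
    intro ω hω
    simp only [Set.mem_setOf_eq] at hω ⊢
    rw [hS_def, Finset.sum_apply]
    exact hω.le
  calc μ {ω | ∑ i ∈ Finset.Icc 1 m, σ i ω < 1} ≤ μ {ω | S ω ≤ 1} := measure_mono hsub
  _ = ENNReal.ofReal ((μ {ω | S ω ≤ 1}).toReal) := (ENNReal.ofReal_toReal (measure_ne_top μ _)).symm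
  _ ≤ ENNReal.ofReal (Real.exp (-c₃ * (n:ℝ) ^ β)) := ENNReal.ofReal_le_ofReal hchain
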